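/- Let k ≥ 0 and let M = ℤ^{k+1} with standard basis v₀, …, v_k. Fix integers P > 0, m₀, and for 1 ≤ j ≤ k integers G_j and non-negative integers Q_j. Suppose u₀, …, u_k ∈ M are vectors, written u_j = Σ_s a_s^{(j)} v_s, satisfying: (a) |a₀^{(0)}|·P + Σ_{s=1}^k |a_s^{(0)}|·Q_s + m₀ ≤ G₀ for some integer G₀ with G₀ < P + m₀; and (b) for each 1 ≤ j ≤ k, |a₀^{(j)}|·P + Σ_{s=1}^k |a_s^{(j)}|·Q_s + m_j ≤ G_j for integers m_j with G_j < P + m_j. Then a₀^{(j)} = 0 for all 0 ≤ j ≤ k, and consequently u₀, …, u_k do not form a ℤ-basis of M. -/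

import Mathlib

/-- Abstract form of Proposition 5.13: the adjunction-type inequalities force
every vector of a candidate basis to have vanishing coefficient on v₀, hence
the candidate vectors do not form a basis of ℤ^{k+1}. -/
theorem abstract_adjunction_no_basis (k : ℕ) (P : ℤ) (hP : 0 < P)
    (m G Q : Fin (k + 1) → ℤ) (hQ : ∀ s, 0 ≤ Q s)
    (u : Fin (k + 1) → Fin (k + 1) → ℤ)
    (hG : ∀ j, G j < P + m j)
    (h : ∀ j, |u j 0| * P +
        (∑ s ∈ Finset.univ.filter (fun s : Fin (k + 1) => s ≠ 0), |u j s| * Q s)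
        + m j ≤ G j) :
    (∀ j, u j 0 = 0) ∧
      ¬ ∃ b : Module.Basis (Fin (k + 1)) ℤ (Fin (k + 1) → ℤ), ⇑b = u := by
  have h0 : ∀ j, u j 0 = 0 := by
    intro j
    have hs : 0 ≤ ∑ s ∈ Finset.univ.filter (fun s : Fin (k + 1) => s ≠ 0),
        |u j s| * Q s :=
      Finset.sum_nonneg fun s _ => mul_nonneg (abs_nonneg _) (hQ s)
    have h1 : |u j 0| * P < 1 * P := by
      have := h j; have := hG j; linarith
    have h2 : |u j 0| < 1 := lt_of_mul_lt_mul_right h1 hP.le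
    have h3 : |u j 0| = 0 := le_antisymm (by linarith) (abs_nonneg _)
    exact abs_eq_zero.mp h3
  refine ⟨h0, ?_⟩
  rintro ⟨b, hb⟩
  have hrepr := b.sum_repr (Pi.single 0 1 : Fin (k + 1) → ℤ)
  have hc := congrFun hrepr 0
  simp [hb, Finset.sum_apply, h0, Pi.single_apply] at hc
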